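/- Let n ≥ 1, a : Fin n → ℝ and b ∈ ℝ with 0 < a i < b for all i, and let λ, μ ∈ ℝ with λ < a i and μ < a i for all i, and μ ≠ 0. Define f_λ on ℝ^{n+1} by multiplying x_i by Real.sqrt ((a i - λ)/(a i)) for i ≥ 1 and x₀ by Real.sqrt ((b - λ)/b). If x ∈ ℝ^{n+1} satisfies q(x) = ∑_{i=1}^n (x i)^2/a i - (x 0)^2/b = 0 and q_μ(x) = ∑_{i=1}^n (x i)^2/(a i - μ) - (x 0)^2/(b - μ) = 0, then q_μ(f_λ x) = 0. (Hyperbolic analog: x and f_λ(x) lie on the same quadrics confocal to the hyperbolic ellipsoid E; this rests on the linear relation (λ/μ) q + (1 - λ/μ) q_μ = q_μ ∘ f_λ.) -/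
import Mathlib


/-- Hyperbolic analog: the points `x ∈ E` and `f_λ(x) ∈ E_λ` lie on the same quadrics confocal
to the hyperbolic ellipsoid `E`: if `q(x) = 0` and `q_μ(x) = 0`, then `q_μ(f_λ x) = 0`. -/
theorem hyperbolic_confocal_map_same_quadrics (n : ℕ) (hn : 1 ≤ n) (a : Fin n → ℝ) (b : ℝ)
    (ha : ∀ i, 0 < a i) (hab : ∀ i, a i < b)
    (lam mu : ℝ) (hlam : ∀ i, lam < a i) (hmu : ∀ i, mu < a i) (hmu0 : mu ≠ 0)
    (f : (Fin (n + 1) → ℝ) →ₗ[ℝ] (Fin (n + 1) → ℝ))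
    (hf0 : ∀ x : Fin (n + 1) → ℝ, f x 0 = Real.sqrt ((b - lam) / b) * x 0)
    (hfi : ∀ (x : Fin (n + 1) → ℝ) (i : Fin n),
      f x i.succ = Real.sqrt ((a i - lam) / a i) * x i.succ)
    (x : Fin (n + 1) → ℝ)
    (hq : ∑ i : Fin n, (x i.succ) ^ 2 / a i - (x 0) ^ 2 / b = 0)
    (hqmu : ∑ i : Fin n, (x i.succ) ^ 2 / (a i - mu) - (x 0) ^ 2 / (b - mu) = 0) :
    ∑ i : Fin n, (f x i.succ) ^ 2 / (a i - mu) - (f x 0) ^ 2 / (b - mu) = 0 := by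
  have hb : (0:ℝ) < b := (ha ⟨0, hn⟩).trans (hab ⟨0, hn⟩)
  have hblam : lam < b := (hlam ⟨0, hn⟩).trans (hab ⟨0, hn⟩)
  have hbmu : mu < b := (hmu ⟨0, hn⟩).trans (hab ⟨0, hn⟩)
  have key : ∀ i : Fin n, (f x i.succ) ^ 2 / (a i - mu) =
      (lam / mu) * ((x i.succ) ^ 2 / a i) + (1 - lam / mu) * ((x i.succ) ^ 2 / (a i - mu)) := by
    intro i
    rw [hfi, mul_pow, Real.sq_sqrt (div_nonneg (sub_nonneg.mpr (hlam i).le) (ha i).le)]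
    have h1 : a i ≠ 0 := (ha i).ne'
    have h2 : a i - mu ≠ 0 := (sub_pos.mpr (hmu i)).ne'
    field_simp
    ring
  have key0 : (f x 0) ^ 2 / (b - mu) =
      (lam / mu) * ((x 0) ^ 2 / b) + (1 - lam / mu) * ((x 0) ^ 2 / (b - mu)) := by
    rw [hf0, mul_pow, Real.sq_sqrt (div_nonneg (sub_nonneg.mpr hblam.le) hb.le)]
    have h1 : b ≠ 0 := hb.ne'
    have h2 : b - mu ≠ 0 := (sub_pos.mpr hbmu).ne'
    field_simp
    ring
  simp only [key, key0, Finset.sum_add_distrib, ← Finset.mul_sum]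
  linear_combination (lam / mu) * hq + (1 - lam / mu) * hqmu
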